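/- Let α, β, γ, δ be real numbers and ε > 0. Suppose B₀, B₁ : ℝ → ℂ are continuously differentiable and satisfy for all x the truncated 1:1 resonance system B₀'(x) = (i/(2ε))B₀(x) + B₁(x) + i ε³ B₀(x) P(x) and B₁'(x) = (i/(2ε))B₁(x) + ε² B₀(x) Q(x) + i ε³ B₁(x) P(x), where K(x) = (i/2)(B₀(x) conj(B₁(x)) − conj(B₀(x)) B₁(x)), P(x) = α + β|B₀(x)|² + ε γ K(x) and Q(x) = −1 + |B₀(x)|² + ε δ K(x). Then K(x) = (i/2)(B₀(x) conj(B₁(x)) − conj(B₀(x)) B₁(x)) is real-valued and constant on ℝ. -/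

import Mathlib

/-- Along any solution of the truncated 1:1 resonance system, the quantity
`K = (i/2)(B₀ conj B₁ − conj B₀ B₁)` is real-valued and constant. -/
theorem K_real_and_constant (α β γ δ ε : ℝ) (hε : 0 < ε)
    (B₀ B₁ : ℝ → ℂ) (hB₀ : ContDiff ℝ 1 B₀) (hB₁ : ContDiff ℝ 1 B₁)
    (K P Q : ℝ → ℂ)
    (hK : ∀ x : ℝ, K x = (Complex.I / 2) *
      (B₀ x * (starRingEnd ℂ) (B₁ x) - (starRingEnd ℂ) (B₀ x) * B₁ x))
    (hP : ∀ x : ℝ, P x = (α : ℂ) + (β : ℂ) * (‖B₀ x‖ : ℂ) ^ 2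
      + (ε : ℂ) * (γ : ℂ) * K x)
    (hQ : ∀ x : ℝ, Q x = -1 + (‖B₀ x‖ : ℂ) ^ 2
      + (ε : ℂ) * (δ : ℂ) * K x)
    (heq₀ : ∀ x : ℝ, deriv B₀ x
      = (Complex.I / (2 * ε)) * B₀ x + B₁ x + Complex.I * (ε : ℂ) ^ 3 * B₀ x * P x)
    (heq₁ : ∀ x : ℝ, deriv B₁ x
      = (Complex.I / (2 * ε)) * B₁ x + (ε : ℂ) ^ 2 * B₀ x * Q x
        + Complex.I * (ε : ℂ) ^ 3 * B₁ x * P x) :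
    ∃ c : ℝ, ∀ x : ℝ, K x = (c : ℂ) := by
  have hdB₀ : ∀ x, HasDerivAt B₀ (deriv B₀ x) x :=
    fun x => (hB₀.differentiable one_ne_zero x).hasDerivAt
  have hdB₁ : ∀ x, HasDerivAt B₁ (deriv B₁ x) x :=
    fun x => (hB₁.differentiable one_ne_zero x).hasDerivAt
  have hKconj : ∀ x, (starRingEnd ℂ) (K x) = K x := by
    intro x
    rw [hK]
    simp only [map_mul, map_sub, map_div₀, Complex.conj_I, map_ofNat,
      RingHomCompTriple.comp_apply, RingHom.id_apply]
    ring
  have hPconj : ∀ x, (starRingEnd ℂ) (P x) = P x := by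
    intro x
    rw [hP]
    simp [map_add, map_mul, Complex.conj_ofReal, hKconj]
  have hQconj : ∀ x, (starRingEnd ℂ) (Q x) = Q x := by
    intro x
    rw [hQ]
    simp [map_add, map_mul, Complex.conj_ofReal, hKconj]
  have hKfun : K = fun x => (Complex.I / 2) *
      (B₀ x * (starRingEnd ℂ) (B₁ x) - (starRingEnd ℂ) (B₀ x) * B₁ x) := funext hK
  have hder : ∀ x, HasDerivAt K 0 x := by
    intro x
    have h1 := hdB₀ x
    have h2 := hdB₁ x
    have h1s := h1.star
    have h2s := h2.star
    have hD : HasDerivAt K ((Complex.I / 2) *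
        ((deriv B₀ x * star (B₁ x) + B₀ x * star (deriv B₁ x))
          - (star (deriv B₀ x) * B₁ x + star (B₀ x) * deriv B₁ x))) x := by
      rw [hKfun]
      simp only [starRingEnd_apply]
      exact ((h1.mul h2s).sub (h1s.mul h2)).const_mul _
    convert hD using 1
    rw [heq₀ x, heq₁ x]
    simp only [← starRingEnd_apply, map_add, map_mul, map_sub, map_div₀, map_pow,
      Complex.conj_I, map_ofNat, Complex.conj_ofReal, hPconj, hQconj]
    ring
  have hdiff : Differentiable ℝ K := fun x => (hder x).differentiableAt
  have hconst : ∀ x : ℝ, K x = K 0 := by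
    intro x
    exact is_const_of_deriv_eq_zero hdiff (fun y => (hder y).deriv) x 0
  refine ⟨(K 0).re, fun x => ?_⟩
  rw [hconst x]
  exact (Complex.conj_eq_iff_re.mp (hKconj 0)).symm
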